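/- Let U be a 2N×2N complex matrix and l₀ > 0, with the first n edge lengths integer multiples of l₀. If the 2N×2n matrix M_even, obtained from the first 2n columns of U by subtracting 1 from the entries at positions (2j, 2j-1) and (2j-1, 2j) for j = 1,…,n, has rank < 2n, then for every m ∈ ℕ the spectral determinant det[U D₁(k) + D₂(k)] vanishes at k = 2mπ/l₀, and the multiplicity of the corresponding eigenvalue 4m²π²/l₀² is at least 2n - rank(M_even). -/

import Mathlib

open Complex

/-- The block-diagonal matrix `D₁(k)` with `2×2` blocks
`[[-sin(klⱼ/2)+ik cos(klⱼ/2), cos(klⱼ/2)+ik sin(klⱼ/2)],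
  [ sin(klⱼ/2)-ik cos(klⱼ/2), cos(klⱼ/2)+ik sin(klⱼ/2)]]`. -/
noncomputable def D1 (N : ℕ) (l : Fin N → ℝ) (k : ℂ) : Matrix (Fin (2 * N)) (Fin (2 * N)) ℂ :=
  Matrix.of fun i c =>
    if (i : ℕ) / 2 = (c : ℕ) / 2 then
      let a : ℂ := k * ((l ⟨(i : ℕ) / 2, by have := i.isLt; omega⟩ : ℝ) : ℂ) / 2
      if (i : ℕ) % 2 = 0 then
        (if (c : ℕ) % 2 = 0 then -Complex.sin a + Complex.I * k * Complex.cos a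
         else Complex.cos a + Complex.I * k * Complex.sin a)
      else
        (if (c : ℕ) % 2 = 0 then Complex.sin a - Complex.I * k * Complex.cos a
         else Complex.cos a + Complex.I * k * Complex.sin a)
    else 0

/-- The block-diagonal matrix `D₂(k)` with `2×2` blocks
`[[ sin(klⱼ/2)+ik cos(klⱼ/2), -cos(klⱼ/2)+ik sin(klⱼ/2)],
  [-sin(klⱼ/2)-ik cos(klⱼ/2), -cos(klⱼ/2)+ik sin(klⱼ/2)]]`. -/
noncomputable def D2 (N : ℕ) (l : Fin N → ℝ) (k : ℂ) : Matrix (Fin (2 * N)) (Fin (2 * N)) ℂ :=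
  Matrix.of fun i c =>
    if (i : ℕ) / 2 = (c : ℕ) / 2 then
      let a : ℂ := k * ((l ⟨(i : ℕ) / 2, by have := i.isLt; omega⟩ : ℝ) : ℂ) / 2
      if (i : ℕ) % 2 = 0 then
        (if (c : ℕ) % 2 = 0 then Complex.sin a + Complex.I * k * Complex.cos a
         else -Complex.cos a + Complex.I * k * Complex.sin a)
      else
        (if (c : ℕ) % 2 = 0 then -Complex.sin a - Complex.I * k * Complex.cos a
         else -Complex.cos a + Complex.I * k * Complex.sin a)
    else 0

/-- The matrix `M_even`: the first `2n` columns of `U` with `1` subtracted at the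
off-diagonal positions of each `2×2` diagonal block (positions `(2j, 2j-1)` and
`(2j-1, 2j)` for `j = 1, …, n`). -/
noncomputable def Meven (N n : ℕ) (U : Matrix (Fin (2 * N)) (Fin (2 * N)) ℂ) (h : 2 * n ≤ 2 * N) :
    Matrix (Fin (2 * N)) (Fin (2 * n)) ℂ :=
  Matrix.of fun i c =>
    U i (Fin.castLE h c) -
      if (i : ℕ) / 2 = (c : ℕ) / 2 ∧ (i : ℕ) ≠ (c : ℕ) then 1 else 0

/-- Subadditivity of matrix rank over a field. -/
lemma matrix_rank_add_le' {p q : ℕ} (A B : Matrix (Fin p) (Fin q) ℂ) :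
    (A + B).rank ≤ A.rank + B.rank := by
  simp only [Matrix.rank]
  rw [Matrix.mulVecLin_add]
  have hr : LinearMap.range (A.mulVecLin + B.mulVecLin) ≤
      LinearMap.range A.mulVecLin ⊔ LinearMap.range B.mulVecLin := by
    rintro x ⟨y, rfl⟩
    exact Submodule.mem_sup.mpr ⟨_, ⟨y, rfl⟩, _, ⟨y, rfl⟩, rfl⟩
  exact le_trans (Submodule.finrank_mono hr)
    (Submodule.finrank_add_le_finrank_add_finrank _ _)

/-- Theorem 1 of the paper: if `rank M_even < 2n` then for every `m ∈ ℕ` the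
spectral determinant vanishes at `k = 2mπ/l₀`, the multiplicity of the
eigenvalue `4m²π²/l₀²` being at least `2n - rank M_even`. -/
theorem embedded_eigenvalues_even
    (N n : ℕ) (hn1 : 1 ≤ n) (hnN : n ≤ N) (l₀ : ℝ) (hl₀ : 0 < l₀)
    (l : Fin N → ℝ)
    (hl : ∀ j : Fin N, (j : ℕ) < n → ∃ nj : ℕ, 0 < nj ∧ l j = (nj : ℝ) * l₀)
    (U : Matrix (Fin (2 * N)) (Fin (2 * N)) ℂ)
    (hrank : (Meven N n U (by omega)).rank < 2 * n)
    (m : ℕ) (hm : 1 ≤ m) (k : ℂ)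
    (hk : k = 2 * (m : ℂ) * (Real.pi : ℂ) / (l₀ : ℂ)) :
    (U * D1 N l k + D2 N l k).det = 0 ∧
    2 * n - (Meven N n U (by omega)).rank ≤ 2 * N - (U * D1 N l k + D2 N l k).rank := by
  have h2 : 2 * n ≤ 2 * N := by omega
  have hrank' : (Meven N n U h2).rank < 2 * n := hrank
  set M : Matrix (Fin (2 * N)) (Fin (2 * N)) ℂ := U * D1 N l k + D2 N l k with hMdef
  have hl₀' : (l₀ : ℂ) ≠ 0 := by
    exact_mod_cast (ne_of_gt hl₀)
  -- the sine of each half-phase vanishes on the rational part of the graph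
  have hsin : ∀ j : Fin N, (j : ℕ) < n → Complex.sin (k * ((l j : ℝ) : ℂ) / 2) = 0 := by
    intro j hj
    obtain ⟨nj, hnj, hlj⟩ := hl j hj
    have ha : k * ((l j : ℝ) : ℂ) / 2 = (((m * nj : ℕ) * Real.pi : ℝ) : ℂ) := by
      rw [hk, hlj]
      push_cast
      field_simp
    rw [ha, ← Complex.ofReal_sin, Real.sin_nat_mul_pi]
    simp
  -- off-block entries of D1 and D2 vanish
  have hD1off : ∀ p q : Fin (2 * N), (p : ℕ) / 2 ≠ (q : ℕ) / 2 → D1 N l k p q = 0 := by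
    intro p q h
    simp [D1, h]
  have hD2off : ∀ p q : Fin (2 * N), (p : ℕ) / 2 ≠ (q : ℕ) / 2 → D2 N l k p q = 0 := by
    intro p q h
    simp [D2, h]
  -- the key sibling identity : for a row i in the first 2n rows, with sibling r₀,
  -- we have D1 r₀ c = - D2 i c for every column c in the first 2n columns
  have hsib : ∀ (i r₀ c : Fin (2 * N)), (i : ℕ) < 2 * n → (c : ℕ) < 2 * n →
      (r₀ : ℕ) = 2 * ((i : ℕ) / 2) + (1 - (i : ℕ) % 2) →
      D1 N l k r₀ c = - D2 N l k i c := by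
    intro i r₀ c hi hc hr
    by_cases hic : (i : ℕ) / 2 = (c : ℕ) / 2
    · have hrc : (r₀ : ℕ) / 2 = (c : ℕ) / 2 := by omega
      have hs0 : Complex.sin (k * ((l ⟨(i : ℕ) / 2, by have := i.isLt; omega⟩ : ℝ) : ℂ) / 2)
          = 0 := hsin _ (by simpa using by omega)
      simp only [D1, D2, Matrix.of_apply, if_pos hrc, if_pos hic]
      have hval : (r₀ : ℕ) / 2 = (i : ℕ) / 2 := by omega
      simp only [hval]
      rw [hs0]
      rcases Nat.even_or_odd (i : ℕ) with hpar | hpar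
    -- i even: r₀ odd
      · have h1 : (i : ℕ) % 2 = 0 := Nat.even_iff.mp hpar
        have h2' : (r₀ : ℕ) % 2 = 1 := by omega
        simp only [h1, h2']
        norm_num
        rcases Nat.even_or_odd (c : ℕ) with hcp | hcp
        · simp [Nat.even_iff.mp hcp]
        · simp [Nat.odd_iff.mp hcp] <;> ring
      · have h1 : (i : ℕ) % 2 = 1 := Nat.odd_iff.mp hpar
        have h2' : (r₀ : ℕ) % 2 = 0 := by omega
        simp only [h1, h2']
        norm_num
        rcases Nat.even_or_odd (c : ℕ) with hcp | hcp
        · simp [Nat.even_iff.mp hcp] <;> ring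
        · simp [Nat.odd_iff.mp hcp] <;> ring
    · have hrc : (r₀ : ℕ) / 2 ≠ (c : ℕ) / 2 := by omega
      rw [hD1off _ _ hrc, hD2off _ _ hic, neg_zero]
  -- the coefficient matrix S and the column selector Q
  set S : Matrix (Fin (2 * n)) (Fin (2 * N)) ℂ :=
    Matrix.of (fun r c => D1 N l k (Fin.castLE h2 r) c) with hSdef
  set w : Fin (2 * N) → ℂ := fun c => if (c : ℕ) < 2 * n then 0 else 1 with hwdef
  -- the key factorization
  have key : M = Meven N n U h2 * S + M * Matrix.diagonal w := by
    ext i c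
    rw [Matrix.add_apply, Matrix.mul_diagonal]
    by_cases hc : (c : ℕ) < 2 * n
    · have hw : w c = 0 := if_pos hc
      rw [hw, mul_zero, add_zero, hMdef]
      rw [Matrix.add_apply, Matrix.mul_apply, Matrix.mul_apply]
      -- RHS : expand Meven and S
      have hRHS : ∀ r : Fin (2 * n), Meven N n U h2 i r * S r c =
          U i (Fin.castLE h2 r) * D1 N l k (Fin.castLE h2 r) c -
          (if (i : ℕ) / 2 = (r : ℕ) / 2 ∧ (i : ℕ) ≠ (r : ℕ) then 1 else 0) *
            D1 N l k (Fin.castLE h2 r) c := by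
        intro r
        simp only [Meven, Matrix.of_apply, hSdef]
        ring
      rw [Finset.sum_congr rfl (fun r _ => hRHS r), Finset.sum_sub_distrib]
      -- first piece : the full sum over Fin (2N) localizes to the first 2n indices
      have hA : ∑ p : Fin (2 * N), U i p * D1 N l k p c
          = ∑ r : Fin (2 * n), U i (Fin.castLE h2 r) * D1 N l k (Fin.castLE h2 r) c := by
        have hmap : ∑ r : Fin (2 * n), U i (Fin.castLE h2 r) * D1 N l k (Fin.castLE h2 r) c
            = ∑ p ∈ Finset.univ.map (Fin.castLEEmb h2), U i p * D1 N l k p c := by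
          rw [Finset.sum_map]
          rfl
        rw [hmap]
        refine (Finset.sum_subset (Finset.subset_univ _) ?_).symm
        intro p _ hp
        have hplt : ¬ ((p : ℕ) < 2 * n) := by
          intro hlt
          exact hp (Finset.mem_map.mpr ⟨⟨(p : ℕ), hlt⟩, Finset.mem_univ _, Fin.ext rfl⟩)
        have : (p : ℕ) / 2 ≠ (c : ℕ) / 2 := by omega
        rw [hD1off _ _ this, mul_zero]
      -- second piece : the correction sum equals -D2 i c
      have hB : ∑ r : Fin (2 * n),
          (if (i : ℕ) / 2 = (r : ℕ) / 2 ∧ (i : ℕ) ≠ (r : ℕ) then 1 else 0) *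
            D1 N l k (Fin.castLE h2 r) c = - D2 N l k i c := by
        by_cases hi : (i : ℕ) < 2 * n
        · have hr0lt : 2 * ((i : ℕ) / 2) + (1 - (i : ℕ) % 2) < 2 * n := by omega
          set r₀ : Fin (2 * n) := ⟨2 * ((i : ℕ) / 2) + (1 - (i : ℕ) % 2), hr0lt⟩ with hr0
          rw [Finset.sum_eq_single r₀]
          · have hδ : ((i : ℕ) / 2 = (r₀ : ℕ) / 2 ∧ (i : ℕ) ≠ (r₀ : ℕ)) := by
              constructor <;> simp [hr0] <;> omega
            rw [if_pos hδ, one_mul]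
            exact hsib i (Fin.castLE h2 r₀) c hi hc (by simp [hr0])
          · intro r _ hr
            have : ¬ ((i : ℕ) / 2 = (r : ℕ) / 2 ∧ (i : ℕ) ≠ (r : ℕ)) := by
              rintro ⟨h1, h3⟩
              apply hr
              apply Fin.ext
              simp only [hr0]
              omega
            rw [if_neg this, zero_mul]
          · intro h
            exact absurd (Finset.mem_univ r₀) h
        · have hzero : ∀ r : Fin (2 * n),
              (if (i : ℕ) / 2 = (r : ℕ) / 2 ∧ (i : ℕ) ≠ (r : ℕ) then 1 else 0) *
                D1 N l k (Fin.castLE h2 r) c = 0 := by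
            intro r
            have : ¬ ((i : ℕ) / 2 = (r : ℕ) / 2 ∧ (i : ℕ) ≠ (r : ℕ)) := by
              rintro ⟨h1, _⟩
              have := r.isLt
              omega
            rw [if_neg this, zero_mul]
          rw [Finset.sum_eq_zero (fun r _ => hzero r)]
          have : (i : ℕ) / 2 ≠ (c : ℕ) / 2 := by omega
          rw [hD2off _ _ this, neg_zero]
      rw [hA, hB]
      ring
    · have hw : w c = 1 := if_neg hc
      rw [hw, mul_one, Matrix.mul_apply]
      have hzero : ∀ r : Fin (2 * n), Meven N n U h2 i r * S r c = 0 := by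
        intro r
        have hrc : ((Fin.castLE h2 r : Fin (2 * N)) : ℕ) / 2 ≠ (c : ℕ) / 2 := by
          have := r.isLt
          simp only [Fin.coe_castLE]
          omega
        simp only [hSdef, Matrix.of_apply]
        rw [hD1off _ _ hrc, mul_zero]
      rw [Finset.sum_eq_zero (fun r _ => hzero r), zero_add]
  -- rank bound
  have hQrank : (Matrix.diagonal w).rank = 2 * N - 2 * n := by
    rw [Matrix.rank_diagonal]
    have hiff : ∀ c : Fin (2 * N), w c ≠ 0 ↔ ¬ ((c : ℕ) < 2 * n) := by
      intro c
      by_cases h : (c : ℕ) < 2 * n <;> simp [hwdef, h]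
    rw [Fintype.card_congr (Equiv.subtypeEquivRight hiff)]
    rw [Fintype.card_subtype_compl]
    have hcard : Fintype.card {c : Fin (2 * N) // (c : ℕ) < 2 * n} = 2 * n := by
      have e : {c : Fin (2 * N) // (c : ℕ) < 2 * n} ≃ Fin (2 * n) :=
        { toFun := fun c => ⟨(c.1 : ℕ), c.2⟩
          invFun := fun r => ⟨Fin.castLE h2 r, r.isLt⟩
          left_inv := fun c => Subtype.ext (Fin.ext rfl)
          right_inv := fun r => Fin.ext rfl }
      rw [Fintype.card_congr e, Fintype.card_fin]
    rw [hcard, Fintype.card_fin]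
  have hMrank : M.rank ≤ (Meven N n U h2).rank + (2 * N - 2 * n) := by
    calc M.rank = (Meven N n U h2 * S + M * Matrix.diagonal w).rank := by rw [← key]
      _ ≤ (Meven N n U h2 * S).rank + (M * Matrix.diagonal w).rank :=
          matrix_rank_add_le' _ _
      _ ≤ (Meven N n U h2).rank + (Matrix.diagonal w).rank :=
          add_le_add (Matrix.rank_mul_le_left _ _) (Matrix.rank_mul_le_right _ _)
      _ = (Meven N n U h2).rank + (2 * N - 2 * n) := by rw [hQrank]
  have hMlt : M.rank < 2 * N := by omega
  have hdet : M.det = 0 := by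
    by_contra hdet
    have hunit : IsUnit M := (Matrix.isUnit_iff_isUnit_det M).mpr (isUnit_iff_ne_zero.mpr hdet)
    have := Matrix.rank_of_isUnit M hunit
    rw [Fintype.card_fin] at this
    omega
  exact ⟨hdet, by omega⟩
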